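/- Let p be an odd prime and 1 ≤ i ≤ (p−1)/2. Then the induced subgraph of Π_p on the set of neighbours of the principal-axis vertex [i,0] is isomorphic to the cycle graph on p vertices. -/

import Mathlib

/-- Pairs `(λ, μ) ∈ (ℤ/N)²` with `gcd(λ, μ, N) = 1`. -/
abbrev PlatonicPair (N : ℕ) : Type :=
  {x : ZMod N × ZMod N // Nat.gcd (Nat.gcd x.1.val x.2.val) N = 1}

/-- Identify `(λ,μ)` with `(-λ,-μ)`. -/
instance platonicSetoid (N : ℕ) : Setoid (PlatonicPair N) where
  r x y := y.val = x.val ∨ y.val = -x.val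
  iseqv := by
    refine ⟨fun _ => Or.inl rfl, ?_, ?_⟩
    · rintro x y (h | h)
      · exact Or.inl h.symm
      · right; rw [h, neg_neg]
    · rintro x y z (h1 | h1) (h2 | h2)
      · exact Or.inl (h2.trans h1)
      · right; rw [h2, h1]
      · right; rw [h2, h1]
      · left; rw [h2, h1, neg_neg]

/-- Vertices of the Platonic graph: classes `[λ,μ] = {(λ,μ), (-λ,-μ)}`. -/
abbrev PlatonicVertex (N : ℕ) : Type := Quotient (platonicSetoid N)

/-- The Platonic graph `Π_N`: distinct classes `[λ,μ]`, `[ν,ω]` are adjacent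
iff `λω - μν = ±1` in `ℤ/N`. -/
def Platonic (N : ℕ) : SimpleGraph (PlatonicVertex N) where
  Adj a b := a ≠ b ∧ ∃ x y : PlatonicPair N, ⟦x⟧ = a ∧ ⟦y⟧ = b ∧
    (x.val.1 * y.val.2 - x.val.2 * y.val.1 = 1 ∨
     x.val.1 * y.val.2 - x.val.2 * y.val.1 = -1)
  symm := by
    refine ⟨?_⟩
    rintro a b ⟨hne, x, y, hx, hy, hdet⟩
    refine ⟨hne.symm, y, x, hy, hx, ?_⟩
    rcases hdet with h | h
    · right; linear_combination -h
    · left; linear_combination -h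
  loopless := ⟨fun a h => h.1 rfl⟩

instance platonicDecRel (N : ℕ) :
    DecidableRel (α := PlatonicPair N) (· ≈ ·) := fun x y =>
  inferInstanceAs (Decidable (y.val = x.val ∨ y.val = -x.val))

instance (N : ℕ) : DecidableEq (PlatonicVertex N) :=
  @Quotient.decidableEq _ _ (platonicDecRel N)

instance (N : ℕ) [NeZero N] : Fintype (PlatonicVertex N) :=
  Quotient.fintype _

instance platonicAdjDec (N : ℕ) [NeZero N] : DecidableRel (Platonic N).Adj := fun a b =>
  inferInstanceAs (Decidable (a ≠ b ∧ ∃ x y : PlatonicPair N, ⟦x⟧ = a ∧ ⟦y⟧ = b ∧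
    (x.val.1 * y.val.2 - x.val.2 * y.val.1 = 1 ∨
     x.val.1 * y.val.2 - x.val.2 * y.val.1 = -1)))

/-- The class of `(λ,μ)` has nonvanishing second coordinate. -/
def secondNZ (N : ℕ) (v : PlatonicVertex N) : Prop :=
  ∀ x : PlatonicPair N, ⟦x⟧ = v → x.val.2 ≠ 0

instance (N : ℕ) [NeZero N] : DecidablePred (secondNZ N) := fun _ =>
  Fintype.decidableForallFintype

/-- The modified Platonic graph `Π_p'`: induced subgraph of `Π_p` on the classes
`[λ,μ]` with `μ ≠ 0`. -/
def ModPlatonic (N : ℕ) : SimpleGraph {v : PlatonicVertex N | secondNZ N v} :=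
  SimpleGraph.induce {v : PlatonicVertex N | secondNZ N v} (Platonic N)

instance (N : ℕ) [NeZero N] : DecidableRel (ModPlatonic N).Adj := fun a b =>
  inferInstanceAs (Decidable ((Platonic N).Adj a b))

/-- The induced subgraph of `Π_p` on the set of neighbours of a principal-axis vertex
`[i,0]` (`1 ≤ i ≤ (p-1)/2`) is isomorphic to the cycle graph on `p` vertices. -/
theorem platonic_wheel_boundary_is_cycle (p : ℕ) (hp : p.Prime) (hodd : Odd p)
    [NeZero p] (i : ℕ) (hi1 : 1 ≤ i) (hi2 : i ≤ (p - 1) / 2)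
    (a : PlatonicVertex p)
    (ha : ∃ x : PlatonicPair p, ⟦x⟧ = a ∧ x.val = ((i : ZMod p), 0)) :
    Nonempty ((SimpleGraph.induce ((Platonic p).neighborSet a) (Platonic p)) ≃g
      SimpleGraph.cycleGraph p) := by
  haveI := Fact.mk hp
  classical
  obtain ⟨n, rfl⟩ : ∃ n, p = n + 2 := ⟨p - 2, by have := hp.two_le; omega⟩
  have hiN : i < n + 2 := by omega
  have hn1 : 1 ≤ n := by
    have := Nat.odd_iff.mp hodd; omega
  have hi0 : (i : ZMod (n+2)) ≠ 0 := by
    have hv : ((i : ℕ) : ZMod (n+2)).val = i := ZMod.val_natCast_of_lt hiN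
    intro h
    rw [h, ZMod.val_zero] at hv
    omega
  set c : ZMod (n+2) := (i : ZMod (n+2))⁻¹ with hc
  have hic : (i : ZMod (n+2)) * c = 1 := mul_inv_cancel₀ hi0
  have hci : c * (i : ZMod (n+2)) = 1 := by rw [mul_comm]; exact hic
  have hc0 : c ≠ 0 := by
    intro h; rw [h, mul_zero] at hic; exact zero_ne_one hic
  have h2 : (2 : ZMod (n+2)) ≠ 0 := by
    have : ((2 : ℕ) : ZMod (n+2)) ≠ 0 := by
      have hv : ((2 : ℕ) : ZMod (n+2)).val = 2 := ZMod.val_natCast_of_lt (by omega)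
      intro h
      rw [h, ZMod.val_zero] at hv
      omega
    simpa using this
  have hcc : c ≠ -c := by
    intro h
    apply hc0
    have : (2 : ZMod (n+2)) * c = 0 := by linear_combination h
    exact (mul_eq_zero.mp this).resolve_left h2
  -- gcd condition
  have gcdOk : ∀ x y : ZMod (n+2), y ≠ 0 → Nat.gcd (Nat.gcd x.val y.val) (n+2) = 1 := by
    intro x y hy
    have hdvd : ¬ (n+2) ∣ Nat.gcd x.val y.val := by
      intro h
      have h1 : (n+2) ∣ y.val := h.trans (Nat.gcd_dvd_right _ _)
      have h2 : y.val < n+2 := ZMod.val_lt y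
      have h3 : y.val ≠ 0 := fun h0 => hy ((ZMod.val_eq_zero y).mp h0)
      exact absurd (Nat.le_of_dvd (Nat.pos_of_ne_zero h3) h1) (not_le.mpr h2)
    exact Nat.coprime_comm.mp ((Nat.Prime.coprime_iff_not_dvd hp).mpr hdvd)
  -- the parametrization of the wheel boundary
  have cls_eq : ∀ x y : PlatonicPair (n+2), ((⟦x⟧ : PlatonicVertex (n+2)) = ⟦y⟧) ↔
      (y.val = x.val ∨ y.val = -x.val) := fun x y => Quotient.eq
  set pr : ZMod (n+2) → PlatonicPair (n+2) :=
    fun k => ⟨(k * (i : ZMod (n+2)), c), gcdOk _ _ hc0⟩ with hpr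
  set f : ZMod (n+2) → PlatonicVertex (n+2) := fun k => ⟦pr k⟧ with hf
  obtain ⟨x0, hx0a, hx0⟩ := ha
  have finj : Function.Injective f := by
    intro k k' h
    rw [hf, cls_eq] at h
    rcases h with h | h
    · have h1 : k' * (i : ZMod (n+2)) = k * (i : ZMod (n+2)) := congrArg Prod.fst h
      exact (mul_left_injective₀ hi0 h1).symm
    · have h2 : c = -c := by
        have := congrArg Prod.snd h
        simpa [hpr] using this
      exact absurd h2 hcc
  have adj_a_f : ∀ k, (Platonic (n+2)).Adj a (f k) := by
    intro k
    refine ⟨?_, x0, pr k, hx0a, rfl, Or.inl ?_⟩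
    · intro h
      rw [← hx0a, hf, cls_eq] at h
      rcases h with h | h
      · have := congrArg Prod.snd h
        rw [hx0] at this
        first | exact hc0 this | exact hc0 this.symm
      · have := congrArg Prod.snd h
        rw [hx0] at this
        simp only [Prod.snd_neg, neg_zero] at this
        first | exact hc0 this | exact hc0 this.symm
    · rw [hx0]
      show (i : ZMod (n+2)) * c - 0 * (k * (i : ZMod (n+2))) = 1
      rw [zero_mul, sub_zero]; exact hic
  -- characterize x with ⟦x⟧ = f k
  have repr_f : ∀ (x : PlatonicPair (n+2)) (k : ZMod (n+2)), (⟦x⟧ : PlatonicVertex (n+2)) = f k →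
      (x.val.1 = k * (i : ZMod (n+2)) ∧ x.val.2 = c) ∨
      (x.val.1 = -(k * (i : ZMod (n+2))) ∧ x.val.2 = -c) := by
    intro x k h
    rw [hf, cls_eq] at h
    rcases h with h | h
    · exact Or.inl ⟨(congrArg Prod.fst h).symm, (congrArg Prod.snd h).symm⟩
    · have h' : x.val = -(pr k).val := by rw [h, neg_neg]
      refine Or.inr ⟨?_, ?_⟩
      · have := congrArg Prod.fst h'
        simpa [hpr] using this
      · have := congrArg Prod.snd h'
        simpa [hpr] using this
  have adj_iff : ∀ k k' : ZMod (n+2), (Platonic (n+2)).Adj (f k) (f k') ↔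
      (k - k' = 1 ∨ k' - k = 1) := by
    intro k k'
    constructor
    · rintro ⟨hne, x, y, hx, hy, hdet⟩
      rcases repr_f x k hx with ⟨e1, e2⟩ | ⟨e1, e2⟩ <;>
        rcases repr_f y k' hy with ⟨g1, g2⟩ | ⟨g1, g2⟩ <;>
        rw [e1, e2, g1, g2] at hdet <;>
        rcases hdet with h | h <;>
        first
          | exact Or.inl (by linear_combination h + (k' - k) * hic)
          | exact Or.inr (by linear_combination -h + (k - k') * hic)
          | exact Or.inr (by linear_combination h + (k - k') * hic)
          | exact Or.inl (by linear_combination -h + (k' - k) * hic)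
    · intro hk
      have hne : f k ≠ f k' := by
        intro h
        have := finj h
        rcases hk with h1 | h1 <;> rw [this, sub_self] at h1 <;>
          exact one_ne_zero h1.symm
      refine ⟨hne, pr k, pr k', rfl, rfl, ?_⟩
      show k * (i : ZMod (n+2)) * c - c * (k' * (i : ZMod (n+2))) = 1 ∨
           k * (i : ZMod (n+2)) * c - c * (k' * (i : ZMod (n+2))) = -1
      rcases hk with h | h
      · exact Or.inl (by linear_combination h + (k - k') * hic)
      · exact Or.inr (by linear_combination -h + (k - k') * hic)
  -- the equivalence
  have fbij : Function.Bijective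
      (fun k : ZMod (n+2) => (⟨f k, adj_a_f k⟩ : (Platonic (n+2)).neighborSet a)) := by
    constructor
    · intro k k' h
      exact finj (congrArg Subtype.val h)
    · rintro ⟨b, hb⟩
      obtain ⟨hne, x, y, hxa, hyb, hdet⟩ := hb
      -- x represents a = [i, 0]
      rw [← hx0a, cls_eq] at hxa
      have hxv : x.val = ((i : ZMod (n+2)), 0) ∨ x.val = (-(i : ZMod (n+2)), -0) := by
        rcases hxa with h | h
        · left; rw [← h, hx0]
        · right
          have h' : x.val = -x0.val := by rw [h, neg_neg]
          rw [h', hx0]; rfl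
      have hx2 : x.val.2 = 0 := by
        rcases hxv with h | h <;> rw [h] <;> simp
      have hx1 : x.val.1 = (i : ZMod (n+2)) ∨ x.val.1 = -(i : ZMod (n+2)) := by
        rcases hxv with h | h
        · left; rw [h]
        · right; rw [h]
      rw [hx2, zero_mul, sub_zero] at hdet
      -- y.val.2 = c or -c
      have hy2 : y.val.2 = c ∨ y.val.2 = -c := by
        rcases hx1 with h1 | h1 <;> rw [h1] at hdet <;> rcases hdet with h | h
        · exact Or.inl (by linear_combination c * h - y.val.2 * hci)
        · exact Or.inr (by linear_combination c * h - y.val.2 * hci)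
        · exact Or.inr (by linear_combination -c * h - y.val.2 * hci)
        · exact Or.inl (by linear_combination -c * h - y.val.2 * hci)
      rcases hy2 with h2 | h2
      · refine ⟨y.val.1 * c, Subtype.ext ?_⟩
        show f (y.val.1 * c) = b
        rw [← hyb, hf]
        have hval : (pr (y.val.1 * c)).val = y.val := by
          show (y.val.1 * c * (i : ZMod (n+2)), c) = y.val
          rw [mul_assoc, hci, mul_one, ← h2]
        exact Quotient.sound (Or.inl hval.symm)
      · refine ⟨-y.val.1 * c, Subtype.ext ?_⟩
        show f (-y.val.1 * c) = b
        rw [← hyb, hf]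
        have hval : (pr (-y.val.1 * c)).val = -y.val := by
          show (-y.val.1 * c * (i : ZMod (n+2)), c) = -y.val
          rw [mul_assoc, hci, mul_one]
          ext
          · simp
          · simp [h2]
        exact Quotient.sound (Or.inr (by rw [hval, neg_neg]))
  set F : ZMod (n+2) ≃ ((Platonic (n+2)).neighborSet a) := Equiv.ofBijective _ fbij with hF
  refine ⟨{ toEquiv := (F.symm : ((Platonic (n+2)).neighborSet a) ≃ Fin (n+2)),
            map_rel_iff' := ?_ }⟩
  intro A B
  rw [SimpleGraph.cycleGraph_adj]
  have hA : (A : PlatonicVertex (n+2)) = f (F.symm A) :=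
    congrArg Subtype.val (F.apply_symm_apply A).symm
  have hB : (B : PlatonicVertex (n+2)) = f (F.symm B) :=
    congrArg Subtype.val (F.apply_symm_apply B).symm
  show ((F.symm A : ZMod (n+2)) - F.symm B = 1 ∨ (F.symm B : ZMod (n+2)) - F.symm A = 1) ↔
    (Platonic (n+2)).Adj (A : PlatonicVertex (n+2)) (B : PlatonicVertex (n+2))
  rw [hA, hB]
  exact (adj_iff _ _).symm
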